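/- Let L be a complete field extension of ℚ_p and let i ≥ 0 be a natural number. There exists no locally analytic function f : ℤ_p → L satisfying i·x·f(x) − x²·f′(x) = x^{i+1} for all x ∈ ℤ_p. (I.e. x^{i+1} is not in the image of the operator u⁻ = i·x − x²·(d/dx) on locally analytic functions on ℤ_p.) -/

import Mathlib

open Topology Nat

section aux

variable {𝕜 : Type*} [NontriviallyNormedField 𝕜]
  {F : Type*} [NormedAddCommGroup F] [NormedSpace 𝕜 F] [CompleteSpace F]
  {R : Type*} [Semiring R] [Module R F] [SMulCommClass 𝕜 R F] [ContinuousConstSMul R F]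

lemma auxAnalyticDeriv {f : 𝕜 → F} {x : 𝕜} (hf : AnalyticAt 𝕜 f x) :
    AnalyticAt 𝕜 (deriv f) x := by
  obtain ⟨t, hts, hto, hxt⟩ := mem_nhds_iff.mp hf.eventually_analyticAt
  exact (AnalyticOnNhd.deriv (fun y hy => hts hy)) x hxt

lemma auxIteratedDerivAdd (n : ℕ) {f g : 𝕜 → F} {x : 𝕜}
    (hf : AnalyticAt 𝕜 f x) (hg : AnalyticAt 𝕜 g x) :
    iteratedDeriv n (fun y => f y + g y) x = iteratedDeriv n f x + iteratedDeriv n g x := by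
  induction n generalizing f g with
  | zero => simp
  | succ n ih =>
    have h1 : deriv (fun y => f y + g y) =ᶠ[𝓝 x] fun y => deriv f y + deriv g y := by
      filter_upwards [hf.eventually_analyticAt, hg.eventually_analyticAt] with y hfy hgy
      exact deriv_add hfy.differentiableAt hgy.differentiableAt
    rw [iteratedDeriv_succ', iteratedDeriv_succ', iteratedDeriv_succ',
      h1.iteratedDeriv_eq n, ih (auxAnalyticDeriv hf) (auxAnalyticDeriv hg)]

lemma auxIteratedDerivConstSmul (n : ℕ) (c : R) {f : 𝕜 → F} {x : 𝕜}
    (hf : AnalyticAt 𝕜 f x) :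
    iteratedDeriv n (fun y => c • f y) x = c • iteratedDeriv n f x := by
  induction n generalizing f with
  | zero => simp
  | succ n ih =>
    have h1 : deriv (fun y => c • f y) =ᶠ[𝓝 x] fun y => c • deriv f y := by
      filter_upwards [hf.eventually_analyticAt] with y hfy
      exact deriv_const_smul c hfy.differentiableAt
    rw [iteratedDeriv_succ', iteratedDeriv_succ', h1.iteratedDeriv_eq n,
      ih (auxAnalyticDeriv hf)]

lemma auxIteratedDerivSmul (n : ℕ) {f : 𝕜 → F} (hf : AnalyticAt 𝕜 f 0) :
    iteratedDeriv (n + 1) (fun y => y • f y) 0 = (n + 1) • iteratedDeriv n f 0 := by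
  induction n generalizing f with
  | zero =>
    rw [iteratedDeriv_one, deriv_fun_smul differentiableAt_fun_id hf.differentiableAt]
    simp
  | succ n ih =>
    have h1 : deriv (fun y => y • f y) =ᶠ[𝓝 (0:𝕜)] fun y => y • deriv f y + f y := by
      filter_upwards [hf.eventually_analyticAt] with y hfy
      rw [deriv_fun_smul differentiableAt_fun_id hfy.differentiableAt]
      simp
    rw [iteratedDeriv_succ', h1.iteratedDeriv_eq (n + 1),
      auxIteratedDerivAdd (n + 1) (f := fun y => y • deriv f y) (g := f)
        (analyticAt_id.smul (auxAnalyticDeriv hf)) hf,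
      ih (auxAnalyticDeriv hf), ← iteratedDeriv_succ']
    rw [succ_nsmul (iteratedDeriv (n + 1) f 0) (n + 1)]

lemma auxIteratedDerivMonomial (k : ℕ) (c : F) :
    iteratedDeriv k (fun y : 𝕜 => y ^ k • c) 0 = k ! • c := by
  induction k with
  | zero => simp
  | succ k ih =>
    have h1 : (fun y : 𝕜 => y ^ (k + 1) • c) = fun y : 𝕜 => y • (y ^ k • c) := by
      funext y; rw [pow_succ, mul_comm, mul_smul]
    rw [h1, auxIteratedDerivSmul k (f := fun y => y ^ k • c)
      ((analyticAt_id.pow k).smul analyticAt_const), ih, smul_smul, Nat.factorial_succ]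

end aux

/-- Let `L` be a complete normed field extension of `ℚ_p` and `i ∈ ℕ`. There is no
locally analytic function `f : ℤ_p → L` with `i·x·f(x) − x²·f′(x) = x^{i+1}` on
`ℤ_p = {x : ℚ_p | ‖x‖ ≤ 1}`, i.e. `x^{i+1}` is not in the image of
`u⁻ = i·x − x²·(d/dx)`. -/
theorem stmt10 (p : ℕ) [Fact p.Prime] (L : Type*) [NontriviallyNormedField L]
    [NormedAlgebra ℚ_[p] L] [CompleteSpace L] (i : ℕ) :
    ¬ ∃ f : ℚ_[p] → L, (∀ x : ℚ_[p], ‖x‖ ≤ 1 → AnalyticAt ℚ_[p] f x) ∧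
      ∀ x : ℚ_[p], ‖x‖ ≤ 1 →
        (i : L) * (x • f x) - x ^ 2 • deriv f x = (x ^ (i + 1)) • (1 : L) := by
  have hchar : CharZero L := charZero_of_injective_algebraMap (algebraMap ℚ_[p] L).injective
  rintro ⟨f, han, heq⟩
  have h0 : AnalyticAt ℚ_[p] f 0 := han 0 (by simp)
  have hf' : AnalyticAt ℚ_[p] (deriv f) 0 := auxAnalyticDeriv h0
  have hball : ∀ᶠ x in 𝓝 (0:ℚ_[p]), ‖x‖ ≤ 1 := by
    have : Metric.closedBall (0:ℚ_[p]) 1 ∈ 𝓝 0 := Metric.closedBall_mem_nhds 0 one_pos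
    filter_upwards [this] with x hx
    simpa [dist_zero_right] using hx
  have key : (fun x : ℚ_[p] => x ^ (i + 1) • (1 : L) + x • (x • deriv f x))
      =ᶠ[𝓝 (0:ℚ_[p])] (fun x => x • ((i : L) * f x)) := by
    filter_upwards [hball] with x hx
    have h := heq x hx
    rw [smul_smul, ← pow_two, ← mul_smul_comm]
    exact (sub_eq_iff_eq_add.mp h).symm
  have H := key.iteratedDeriv_eq (i + 1)
  rw [auxIteratedDerivAdd (i + 1) (f := fun x => x ^ (i + 1) • (1 : L))
        (g := fun x => x • (x • deriv f x))
        ((analyticAt_id.pow (i + 1)).smul analyticAt_const)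
        (analyticAt_id.smul (analyticAt_id.smul hf')),
      auxIteratedDerivMonomial (i + 1) (1 : L),
      auxIteratedDerivSmul i (f := fun x => x • deriv f x) (analyticAt_id.smul hf'),
      auxIteratedDerivSmul i (f := fun x => (i : L) * f x)
        ((analyticAt_const (v := (i : L))).mul h0)]
    at H
  have hT : iteratedDeriv i (fun x : ℚ_[p] => x • deriv f x) 0 = i • iteratedDeriv i f 0 := by
    cases i with
    | zero => simp
    | succ j =>
      rw [auxIteratedDerivSmul j hf', ← iteratedDeriv_succ']
  have hC : iteratedDeriv i (fun x : ℚ_[p] => (i : L) * f x) 0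
      = i • iteratedDeriv i f 0 := by
    have := auxIteratedDerivConstSmul (R := L) i ((i : L)) h0 (x := (0:ℚ_[p]))
    simpa [smul_eq_mul, nsmul_eq_mul] using this
  rw [hT, hC] at H
  have hzero : ((i + 1)! : ℕ) • (1 : L) = 0 := by
    exact add_eq_right.mp H
  rw [nsmul_eq_mul, mul_one] at hzero
  exact (Nat.cast_ne_zero.mpr (Nat.factorial_ne_zero (i + 1))) hzero
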